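/- Fix μ, θ, μ̃, θ̃ ∈ ℝ with μ̃ > 0, a natural number n ≥ 1, maturities 0 < T₁ < … < T_n, and a time t ∈ (T_{n−1}, T_n]. Let (Ω, F, P) be a probability space and let S₀ ∈ ℝ and S_t, S_{T₁}, …, S_{T_{n−1}} be integrable real random variables such that E[S_u] = (S₀ − θ)e^{−μu} + θ for each u ∈ {t, T₁, …, T_{n−1}}. Define the futures prices f^{(j)}_u := (S_u − θ̃)e^{−μ̃(T_j − u)} + θ̃ (with f^{(1)}_0 := (S₀ − θ̃)e^{−μ̃T₁} + θ̃), and the cumulative roll yield R(0,t) := ( f^{(n)}_t − S_t ) − ( f^{(1)}_0 − S₀ ) + Σ_{j=1}^{n−1} ( S_{T_j} − f^{(j+1)}_{T_j} ). Then E[R(0,t)] = ( (S₀ − θ)e^{−μt} + θ − θ̃ )( e^{−μ̃(T_n − t)} − 1 ) − ( S₀ − θ̃ )( e^{−μ̃T₁} − 1 ) + Σ_{j=1}^{n−1} ( (S₀ − θ)e^{−μT_j} + θ − θ̃ )( 1 − e^{−μ̃(T_{j+1} − T_j)} ). -/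

import Mathlib

open Real Finset MeasureTheory

/-- Expected cumulative roll yield under the OU spot model. `St` is the spot at time `t`
and `ST j` the spot at maturity `T j`; each has the OU historical mean
`(S₀ − θ)e^{−μu} + θ`. The futures price with maturity `T` at time `u` is
`(S_u − θ̃)e^{−μ̃(T−u)} + θ̃`, and the cumulative roll yield up to `t ∈ (T_{n−1}, T_n]` is
`(f_t^{T_n} − S_t) − (f_0^{T_1} − S_0) + Σ_{j=1}^{n−1}(S_{T_j} − f_{T_j}^{T_{j+1}})`. -/
theorem expected_roll_yield_ou (μ θ μt θt : ℝ) (hμt : 0 < μt)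
    (n : ℕ) (hn : 1 ≤ n) (T : ℕ → ℝ) (hT1 : 0 < T 1)
    (hTmono : ∀ j, 1 ≤ j → j < n → T j < T (j + 1)) (t : ℝ)
    (ht : T (n - 1) < t ∧ t ≤ T n)
    (Ω : Type*) [MeasurableSpace Ω] (P : Measure Ω) [IsProbabilityMeasure P]
    (S0 : ℝ) (St : Ω → ℝ) (ST : ℕ → Ω → ℝ)
    (hSt_int : Integrable St P)
    (hST_int : ∀ j ∈ Icc 1 (n - 1), Integrable (ST j) P)
    (hSt_mean : ∫ ω, St ω ∂P = (S0 - θ) * exp (-μ * t) + θ)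
    (hST_mean : ∀ j ∈ Icc 1 (n - 1), ∫ ω, ST j ω ∂P = (S0 - θ) * exp (-μ * T j) + θ) :
    ∫ ω, ((((St ω - θt) * exp (-μt * (T n - t)) + θt) - St ω)
        - (((S0 - θt) * exp (-μt * T 1) + θt) - S0)
        + ∑ j ∈ Icc 1 (n - 1),
            (ST j ω - ((ST j ω - θt) * exp (-μt * (T (j + 1) - T j)) + θt))) ∂P
      = ((S0 - θ) * exp (-μ * t) + θ - θt) * (exp (-μt * (T n - t)) - 1)
        - (S0 - θt) * (exp (-μt * T 1) - 1)
        + ∑ j ∈ Icc 1 (n - 1),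
            ((S0 - θ) * exp (-μ * T j) + θ - θt) * (1 - exp (-μt * (T (j + 1) - T j))) := by
  set C : ℝ := ((S0 - θt) * exp (-μt * T 1) + θt) - S0 with hC
  have hrw : (fun ω => ((((St ω - θt) * exp (-μt * (T n - t)) + θt) - St ω)
        - (((S0 - θt) * exp (-μt * T 1) + θt) - S0)
        + ∑ j ∈ Icc 1 (n - 1),
            (ST j ω - ((ST j ω - θt) * exp (-μt * (T (j + 1) - T j)) + θt))))
      = fun ω => ((St ω - θt) * (exp (-μt * (T n - t)) - 1) - C)
        + ∑ j ∈ Icc 1 (n - 1),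
            ((ST j ω - θt) * (1 - exp (-μt * (T (j + 1) - T j)))) := by
    funext ω
    rw [Finset.sum_congr rfl (fun j _ => by ring :
      ∀ j ∈ Icc 1 (n - 1), (ST j ω - ((ST j ω - θt) * exp (-μt * (T (j + 1) - T j)) + θt))
        = (ST j ω - θt) * (1 - exp (-μt * (T (j + 1) - T j))))]
    ring
  rw [hrw]
  have hint1 : Integrable (fun ω => (St ω - θt) * (exp (-μt * (T n - t)) - 1) - C) P :=
    (((hSt_int.sub (integrable_const θt)).mul_const _).sub (integrable_const C))
  have hint2 : ∀ j ∈ Icc 1 (n - 1),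
      Integrable (fun ω => (ST j ω - θt) * (1 - exp (-μt * (T (j + 1) - T j)))) P :=
    fun j hj => ((hST_int j hj).sub (integrable_const θt)).mul_const _
  have hsub : Integrable (fun ω => St ω - θt) P := hSt_int.sub (integrable_const θt)
  have hsub' : ∀ j ∈ Icc 1 (n - 1), Integrable (fun ω => ST j ω - θt) P :=
    fun j hj => (hST_int j hj).sub (integrable_const θt)
  rw [integral_add hint1 (integrable_finset_sum _ hint2), integral_finset_sum _ hint2,
    integral_sub (hsub.mul_const _) (integrable_const C),
    integral_mul_const, integral_sub hSt_int (integrable_const θt), hSt_mean,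
    integral_const, probReal_univ]
  rw [Finset.sum_congr rfl (fun j hj => by
    rw [integral_mul_const, integral_sub (hST_int j hj) (integrable_const θt),
      hST_mean j hj, integral_const, probReal_univ]
    simp only [ENNReal.toReal_one, smul_eq_mul, one_mul] :
    ∀ j ∈ Icc 1 (n - 1), ∫ ω, (ST j ω - θt) * (1 - exp (-μt * (T (j + 1) - T j))) ∂P
      = ((S0 - θ) * exp (-μ * T j) + θ - θt) * (1 - exp (-μt * (T (j + 1) - T j))))]
  simp only [integral_const, probReal_univ, ENNReal.toReal_one, smul_eq_mul, one_mul, hC]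
  ring
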